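/- In A, the element h commutes with the element e·f, i.e. h·(e·f) = (e·f)·h. -/
import Mathlib

/-- `h` commutes with `e·f`: `h·(e·f) = (e·f)·h`. -/
theorem jz_h_commutes_ef {A : Type*} [Ring A] [Algebra ℂ A]
    (q : ℂ) (hq : q ≠ 0) (e f h : A)
    (rel1 : q • (h * e) - e * h = 2 * e)
    (rel2 : h * f - q • (f * h) = -(2 * f))
    (rel3 : e * f - q • (f * e) = h + ((1 - q) / 4) • h ^ 2) :
    h * (e * f) = (e * f) * h := by
  have h1 : q • (h * e) = 2 * e + e * h := sub_eq_iff_eq_add.mp rel1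
  have h2 : h * f = -(2 * f) + q • (f * h) := sub_eq_iff_eq_add.mp rel2
  have key : q • (h * (e * f)) = q • ((e * f) * h) := by
    calc q • (h * (e * f)) = (q • (h * e)) * f := by
          rw [smul_mul_assoc, mul_assoc]
      _ = (2 * e + e * h) * f := by rw [h1]
      _ = e * (h * f) + 2 * (e * f) := by noncomm_ring
      _ = e * (-(2 * f) + q • (f * h)) + 2 * (e * f) := by rw [h2]
      _ = q • ((e * f) * h) := by
          rw [mul_add, mul_smul_comm]; noncomm_ring
  have := congrArg (fun x => q⁻¹ • x) key
  simpa [smul_smul, inv_mul_cancel₀ hq] using this
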